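/- For every simple graph G of pathwidth at most p and every integer k ≥ 1, the k-subdivision G^k has pathwidth at most p + 2. -/

import Mathlib

/-- Representatives of internal vertices of the `k`-subdivision of `G`:
a dart `d` of `G` together with a position `i : Fin k`; the pair `(d, i)` is
identified with `(d.symm, k - 1 - i)`. -/
def SubdivRep {V : Type*} (G : SimpleGraph V) (k : ℕ) :
    G.Dart × Fin k → G.Dart × Fin k → Prop :=
  fun a b => b.1 = a.1.symm ∧ (b.2 : ℕ) = k - 1 - (a.2 : ℕ)

/-- Internal vertices of the `k`-subdivision of `G`. -/
abbrev SubdivInternal {V : Type*} (G : SimpleGraph V) (k : ℕ) :=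
  Quot (SubdivRep G k)

/-- Vertices of the `k`-subdivision of `G`: the branch vertices (`Sum.inl`)
are the original vertices of `G`, and `Sum.inr` are the internal vertices. -/
abbrev SubdivVertex {V : Type*} (G : SimpleGraph V) (k : ℕ) :=
  V ⊕ SubdivInternal G k

/-- One-directional adjacency for the `k`-subdivision: a branch vertex `u` is
adjacent to the first internal vertex of any edge of `G` leaving `u` (via the
identification, also to the last internal vertex of any edge entering `u`),
and consecutive internal vertices on a subdivided edge are adjacent. -/
def SubdivAdjBase {V : Type*} (G : SimpleGraph V) (k : ℕ) :
    SubdivVertex G k → SubdivVertex G k → Prop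
  | Sum.inl u, Sum.inr x =>
      ∃ (d : G.Dart) (i : Fin k), (i : ℕ) = 0 ∧ d.toProd.1 = u ∧
        x = Quot.mk (SubdivRep G k) (d, i)
  | Sum.inr x, Sum.inr y =>
      ∃ (d : G.Dart) (i j : Fin k), (j : ℕ) = (i : ℕ) + 1 ∧
        x = Quot.mk (SubdivRep G k) (d, i) ∧ y = Quot.mk (SubdivRep G k) (d, j)
  | _, _ => False

/-- The `k`-subdivision of a simple graph `G`: every edge `uv` of `G` is
replaced by a path from `u` to `v` through `k` new internal vertices. -/
def Subdivision {V : Type*} (G : SimpleGraph V) (k : ℕ) :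
    SimpleGraph (SubdivVertex G k) where
  Adj x y := x ≠ y ∧ (SubdivAdjBase G k x y ∨ SubdivAdjBase G k y x)
  symm := ⟨fun x y h => ⟨Ne.symm h.1, h.2.symm⟩⟩
  loopless := ⟨fun x h => h.1 rfl⟩

/-- A path decomposition of a graph `G`: a finite sequence of bags such that
every vertex appears in a nonempty contiguous interval of bags, and every edge
has both its endpoints together in some bag. -/
structure PathDecomposition {V : Type*} (G : SimpleGraph V) where
  /-- number of bags -/
  m : ℕ
  /-- the bags -/
  bags : Fin m → Set V
  mem_nonempty : ∀ v : V, ∃ i, v ∈ bags i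
  mem_interval : ∀ (v : V) (i j l : Fin m),
    i ≤ j → j ≤ l → v ∈ bags i → v ∈ bags l → v ∈ bags j
  edge_mem : ∀ u v : V, G.Adj u v → ∃ i, u ∈ bags i ∧ v ∈ bags i

/-- `G` has pathwidth at most `p` if it has a path decomposition all of whose
bags are finite of size at most `p + 1`. -/
def PathwidthLE {V : Type*} (G : SimpleGraph V) (p : ℕ) : Prop :=
  ∃ D : PathDecomposition G,
    ∀ i, (D.bags i).Finite ∧ (D.bags i).ncard ≤ p + 1

namespace Statement8Aux

open SimpleGraph

variable {V : Type*} {G : SimpleGraph V} {k : ℕ}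

lemma rep_equiv (hk : 0 < k) :
    Equivalence (fun a b : G.Dart × Fin k => a = b ∨ SubdivRep G k a b) := by
  constructor
  · exact fun _ => Or.inl rfl
  · rintro a b (rfl | ⟨h1, h2⟩)
    · exact Or.inl rfl
    · refine Or.inr ⟨by rw [h1, SimpleGraph.Dart.symm_symm], ?_⟩
      have := a.2.isLt
      omega
  · rintro a b c (rfl | ⟨h1, h2⟩) hbc
    · exact hbc
    · rcases hbc with rfl | ⟨h3, h4⟩
      · exact Or.inr ⟨h1, h2⟩
      · left
        have ha2 := a.2.isLt
        have hc1 : a.1 = c.1 := by rw [h3, h1, SimpleGraph.Dart.symm_symm]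
        have hc2 : (a.2 : ℕ) = (c.2 : ℕ) := by omega
        exact Prod.ext hc1 (Fin.ext hc2)

lemma mk_eq_mk (hk : 0 < k) {a b : G.Dart × Fin k} :
    Quot.mk (SubdivRep G k) a = Quot.mk (SubdivRep G k) b ↔ a = b ∨ SubdivRep G k a b := by
  constructor
  · intro h
    exact ((rep_equiv hk).eqvGen_iff).mp
      (Relation.EqvGen.mono (fun x y hxy => Or.inr hxy) _ _ (Quot.eq.mp h))
  · rintro (rfl | h)
    · rfl
    · exact Quot.sound h

lemma cano_unique (hk : 0 < k) {ord : V → ℕ} {d d' : G.Dart} {t t' : Fin k}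
    (h : ord d.toProd.1 < ord d.toProd.2) (h' : ord d'.toProd.1 < ord d'.toProd.2)
    (heq : Quot.mk (SubdivRep G k) (d, t) = Quot.mk (SubdivRep G k) (d', t')) :
    d = d' ∧ t = t' := by
  rcases (mk_eq_mk hk).mp heq with h1 | ⟨h1, h2⟩
  · exact ⟨congrArg Prod.fst h1, congrArg Prod.snd h1⟩
  · exfalso
    simp only at h1
    rw [h1] at h'
    simp only [SimpleGraph.Dart.symm_toProd, Prod.fst_swap, Prod.snd_swap] at h'
    omega

/-- The bags of `D`, reindexed over `ℕ`. -/
noncomputable def bagsN (D : PathDecomposition G) (n : ℕ) : Set V :=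
  if h : n < D.m then D.bags ⟨n, h⟩ else ∅

lemma mem_bagsN {D : PathDecomposition G} {n : ℕ} {u : V} :
    u ∈ bagsN D n ↔ ∃ h : n < D.m, u ∈ D.bags ⟨n, h⟩ := by
  unfold bagsN
  split
  · next h => exact ⟨fun hu => ⟨h, hu⟩, fun ⟨_, hu⟩ => hu⟩
  · next h => simp [h]

open Classical in
/-- The darts assigned to bag `i`, positively oriented w.r.t. `ord`. -/
noncomputable def dartList [Fintype G.Dart] (D : PathDecomposition G)
    (a : G.Dart → Fin D.m) (ord : V → ℕ) (i : ℕ) : List G.Dart :=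
  ((Finset.univ : Finset G.Dart).filter
    (fun d => ord d.toProd.1 < ord d.toProd.2 ∧ (a d : ℕ) = i)).toList

lemma mem_dartList [Fintype G.Dart] {D : PathDecomposition G}
    {a : G.Dart → Fin D.m} {ord : V → ℕ} {i : ℕ} {d : G.Dart} :
    d ∈ dartList D a ord i ↔ (ord d.toProd.1 < ord d.toProd.2 ∧ (a d : ℕ) = i) := by
  simp [dartList]

lemma nodup_dartList [Fintype G.Dart] (D : PathDecomposition G)
    (a : G.Dart → Fin D.m) (ord : V → ℕ) (i : ℕ) :
    (dartList D a ord i).Nodup := Finset.nodup_toList _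

lemma length_dartList_lt [Fintype G.Dart] (D : PathDecomposition G)
    (a : G.Dart → Fin D.m) (ord : V → ℕ) (i : ℕ) :
    (dartList D a ord i).length < Fintype.card G.Dart + 1 := by
  rw [dartList, Finset.length_toList]
  exact Nat.lt_succ_of_le ((Finset.card_filter_le _ _).trans (le_of_eq Finset.card_univ))

/-- The bag of the subdivision decomposition indexed by `(i, s, j)`. -/
noncomputable def bigBag [Fintype G.Dart] (D : PathDecomposition G)
    (a : G.Dart → Fin D.m) (ord : V → ℕ) (hk : 0 < k) (i s j : ℕ) :
    Set (SubdivVertex G k) :=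
  Sum.inl '' bagsN D i ∪
    (if h : s < (dartList D a ord i).length ∧ j < k then
      {Sum.inr (Quot.mk (SubdivRep G k) ((dartList D a ord i).get ⟨s, h.1⟩, ⟨j, h.2⟩)),
       Sum.inr (Quot.mk (SubdivRep G k) ((dartList D a ord i).get ⟨s, h.1⟩,
         ⟨min (j+1) (k-1), Nat.lt_of_le_of_lt (Nat.min_le_right _ _) (Nat.sub_lt hk Nat.one_pos)⟩))}
    else ∅)

lemma inl_mem_bigBag [Fintype G.Dart] {D : PathDecomposition G}
    {a : G.Dart → Fin D.m} {ord : V → ℕ} {hk : 0 < k} {i s j : ℕ} {u : V} :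
    (Sum.inl u : SubdivVertex G k) ∈ bigBag D a ord hk i s j ↔ u ∈ bagsN D i := by
  unfold bigBag
  simp only [Set.mem_union, Set.mem_image]
  constructor
  · rintro (⟨v, hv, hvu⟩ | h)
    · rwa [← Sum.inl_injective hvu]
    · by_cases hc : s < (dartList D a ord i).length ∧ j < k
      · rw [dif_pos hc] at h
        simp at h
      · rw [dif_neg hc] at h
        exact absurd h (Set.notMem_empty _)
  · exact fun h => Or.inl ⟨u, h, rfl⟩

lemma inr_mem_bigBag [Fintype G.Dart] {D : PathDecomposition G}
    {a : G.Dart → Fin D.m} {ord : V → ℕ} {hk : 0 < k} {i s j : ℕ}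
    {x : SubdivInternal G k} :
    (Sum.inr x : SubdivVertex G k) ∈ bigBag D a ord hk i s j ↔
      ∃ h : s < (dartList D a ord i).length ∧ j < k,
        x = Quot.mk (SubdivRep G k) ((dartList D a ord i).get ⟨s, h.1⟩, ⟨j, h.2⟩) ∨
        x = Quot.mk (SubdivRep G k) ((dartList D a ord i).get ⟨s, h.1⟩,
          ⟨min (j+1) (k-1), Nat.lt_of_le_of_lt (Nat.min_le_right _ _) (Nat.sub_lt hk Nat.one_pos)⟩) := by
  unfold bigBag
  simp only [Set.mem_union, Set.mem_image]
  constructor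
  · rintro (⟨v, hv, hvu⟩ | h)
    · exact absurd hvu (by simp)
    · by_cases hc : s < (dartList D a ord i).length ∧ j < k
      · rw [dif_pos hc] at h
        simp only [Set.mem_insert_iff, Set.mem_singleton_iff, Sum.inr.injEq] at h
        exact ⟨hc, h⟩
      · rw [dif_neg hc] at h
        exact absurd h (Set.notMem_empty _)
  · rintro ⟨hc, h⟩
    right
    rw [dif_pos hc]
    simp only [Set.mem_insert_iff, Set.mem_singleton_iff, Sum.inr.injEq]
    exact h

lemma bigBag_finite [Fintype G.Dart] {D : PathDecomposition G}
    {a : G.Dart → Fin D.m} {ord : V → ℕ} {hk : 0 < k} {i s j : ℕ}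
    (hfin : ∀ i, (D.bags i).Finite) : (bigBag D a ord hk i s j).Finite := by
  unfold bigBag
  apply Set.Finite.union
  · apply Set.Finite.image
    unfold bagsN
    split
    · exact hfin _
    · exact Set.finite_empty
  · split
    · exact (Set.finite_singleton _).insert _
    · exact Set.finite_empty

lemma bigBag_ncard [Fintype G.Dart] {D : PathDecomposition G}
    {a : G.Dart → Fin D.m} {ord : V → ℕ} {hk : 0 < k} {i s j : ℕ} {p : ℕ}
    (hcard : ∀ i, (D.bags i).ncard ≤ p + 1) :
    (bigBag D a ord hk i s j).ncard ≤ p + 3 := by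
  unfold bigBag
  refine le_trans (Set.ncard_union_le _ _) ?_
  have h1 : (Sum.inl '' bagsN D i : Set (SubdivVertex G k)).ncard ≤ p + 1 := by
    rw [Set.ncard_image_of_injective _ Sum.inl_injective]
    unfold bagsN
    split
    · exact hcard _
    · simp
  have h2 : ∀ (c : Prop) (inst : Decidable c) (f : c → Set (SubdivVertex G k)),
      (∀ h, (f h).ncard ≤ 2) → (dite c f (fun _ => ∅)).ncard ≤ 2 := by
    intro c inst f hf
    split
    · exact hf _
    · simp
  refine le_trans (add_le_add h1 (h2 _ _ _ fun h => ?_)) (by omega)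
  exact le_trans (Set.ncard_insert_le _ _) (by simp)

lemma encode_decode (N k m i0 s0 j0 : ℕ) (hi : i0 < m) (hs : s0 < N) (hj : j0 < k) :
    N * k * i0 + (k * s0 + j0) < m * (N * k) ∧
    (N * k * i0 + (k * s0 + j0)) / (N * k) = i0 ∧
    (N * k * i0 + (k * s0 + j0)) % (N * k) / k = s0 ∧
    (N * k * i0 + (k * s0 + j0)) % k = j0 := by
  have hk : 0 < k := Nat.pos_of_ne_zero (by omega)
  have hN : 0 < N := Nat.pos_of_ne_zero (by omega)
  have hNk : 0 < N * k := Nat.mul_pos hN hk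
  have e1 : k * (s0 + 1) = k * s0 + k := Nat.mul_succ k s0
  have e2 : k * (s0 + 1) ≤ k * N := Nat.mul_le_mul_left _ hs
  have e3 : k * N = N * k := Nat.mul_comm k N
  have hr : k * s0 + j0 < N * k := by omega
  have e4 : N * k * (i0 + 1) = N * k * i0 + N * k := Nat.mul_succ _ i0
  have e5 : N * k * (i0 + 1) ≤ N * k * m := Nat.mul_le_mul_left _ hi
  have e6 : N * k * m = m * (N * k) := Nat.mul_comm _ _
  refine ⟨by omega, ?_, ?_, ?_⟩
  · rw [Nat.mul_add_div hNk, Nat.div_eq_of_lt hr, Nat.add_zero]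
  · rw [Nat.mul_add_mod, Nat.mod_eq_of_lt hr, Nat.mul_add_div hk, Nat.div_eq_of_lt hj,
      Nat.add_zero]
  · have e7 : N * k * i0 + (k * s0 + j0) = k * (N * i0 + s0) + j0 := by ring
    rw [e7, Nat.mul_add_mod, Nat.mod_eq_of_lt hj]

lemma recompose (N k t : ℕ) (hN : 0 < N) (hk : 0 < k) :
    t = N * k * (t / (N * k)) + (k * (t % (N * k) / k) + t % k) ∧
    t % (N * k) / k < N ∧ t % k < k := by
  have hNk : 0 < N * k := Nat.mul_pos hN hk
  have h1 := Nat.div_add_mod t (N * k)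
  have h2 := Nat.div_add_mod (t % (N * k)) k
  have h3 : t % (N * k) % k = t % k := Nat.mod_mod_of_dvd t ⟨N, Nat.mul_comm N k⟩
  have h4 : t % (N * k) < N * k := Nat.mod_lt _ hNk
  have h5 : t % k < k := Nat.mod_lt _ hk
  exact ⟨by omega, (Nat.div_lt_iff_lt_mul hk).mpr h4, h5⟩

lemma get_congr' {α : Type*} {l l' : List α} (h : l = l') {s : ℕ} (hs : s < l.length) :
    l.get ⟨s, hs⟩ = l'.get ⟨s, h ▸ hs⟩ := by subst h; rfl

lemma j_interval {k t0 j1 j2 j3 : ℕ} (hk : 0 < k) (hj3 : j3 < k) (h12 : j1 ≤ j2) (h23 : j2 ≤ j3)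
    (h1 : t0 = j1 ∨ t0 = min (j1+1) (k-1)) (h3 : t0 = j3 ∨ t0 = min (j3+1) (k-1)) :
    t0 = j2 ∨ t0 = min (j2+1) (k-1) := by omega

/-- Key existence lemma: a bag of the subdivision decomposition containing all of
`D.bags (a d0)` (as branch vertices), the internal vertex `(d0, j0)` and the
internal vertex `(d0, min (j0+1) (k-1))`. -/
lemma exists_good_bag [Fintype G.Dart] (hk : 0 < k) (D : PathDecomposition G)
    (a : G.Dart → Fin D.m) (ord : V → ℕ)
    (d0 : G.Dart) (hd0 : d0 ∈ dartList D a ord (a d0).1) (j0 : ℕ) (hj0 : j0 < k) :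
    ∃ t : Fin (D.m * ((Fintype.card G.Dart + 1) * k)),
      (∀ u, u ∈ D.bags (a d0) → (Sum.inl u : SubdivVertex G k) ∈
        bigBag D a ord hk (t.1 / ((Fintype.card G.Dart + 1) * k))
          (t.1 % ((Fintype.card G.Dart + 1) * k) / k) (t.1 % k)) ∧
      (Sum.inr (Quot.mk (SubdivRep G k) (d0, ⟨j0, hj0⟩)) : SubdivVertex G k) ∈
        bigBag D a ord hk (t.1 / ((Fintype.card G.Dart + 1) * k))
          (t.1 % ((Fintype.card G.Dart + 1) * k) / k) (t.1 % k) ∧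
      (Sum.inr (Quot.mk (SubdivRep G k) (d0,
          ⟨min (j0+1) (k-1), Nat.lt_of_le_of_lt (Nat.min_le_right _ _) (Nat.sub_lt hk Nat.one_pos)⟩))
        : SubdivVertex G k) ∈
        bigBag D a ord hk (t.1 / ((Fintype.card G.Dart + 1) * k))
          (t.1 % ((Fintype.card G.Dart + 1) * k) / k) (t.1 % k) := by
  obtain ⟨n, hn⟩ := List.mem_iff_get.mp hd0
  set N := Fintype.card G.Dart + 1 with hN
  have hs0 : (n : ℕ) < N := lt_trans n.isLt (length_dartList_lt D a ord (a d0).1)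
  obtain ⟨hbound, hieq, hseq, hjeq⟩ :=
    encode_decode N k D.m (a d0).1 n.1 j0 (a d0).isLt hs0 hj0
  refine ⟨⟨N * k * (a d0).1 + (k * n.1 + j0), hbound⟩, ?_, ?_, ?_⟩
  · intro u hu
    rw [hieq]
    refine inl_mem_bigBag.mpr (mem_bagsN.mpr ⟨(a d0).isLt, ?_⟩)
    exact (by rw [Fin.eta] : (⟨(a d0).1, (a d0).isLt⟩ : Fin D.m) = a d0) ▸ hu
  · rw [hieq, hseq, hjeq]
    refine inr_mem_bigBag.mpr ⟨⟨n.isLt, hj0⟩, Or.inl ?_⟩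
    rw [show (dartList D a ord (a d0).1).get ⟨n.1, n.isLt⟩ = d0 from hn]
  · rw [hieq, hseq, hjeq]
    refine inr_mem_bigBag.mpr ⟨⟨n.isLt, hj0⟩, Or.inr ?_⟩
    rw [show (dartList D a ord (a d0).1).get ⟨n.1, n.isLt⟩ = d0 from hn]

end Statement8Aux
open Statement8Aux in
/-- If `G` has pathwidth at most `p`, then for every `k ≥ 1` its
`k`-subdivision `G^k` has pathwidth at most `p + 2`. -/
theorem statement8 {V : Type*} (G : SimpleGraph V) (p : ℕ)
    (hG : PathwidthLE G p) (k : ℕ) (hk : 1 ≤ k) :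
    PathwidthLE (Subdivision G k) (p + 2) := by
  classical
  obtain ⟨D, hD⟩ := hG
  have hk0 : 0 < k := hk
  have hVfin : Finite V := by
    rw [← Set.finite_univ_iff]
    apply Set.Finite.subset (Set.finite_iUnion (fun i : Fin D.m => (hD i).1))
    intro v _
    obtain ⟨i, hi⟩ := D.mem_nonempty v
    exact Set.mem_iUnion.mpr ⟨i, hi⟩
  haveI := Fintype.ofFinite V
  have hDartFin : Finite G.Dart :=
    Finite.of_injective _ SimpleGraph.Dart.toProd_injective
  haveI := Fintype.ofFinite G.Dart
  set a : G.Dart → Fin D.m := fun d => (D.edge_mem _ _ d.adj).choose with ha_def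
  have ha : ∀ d : G.Dart, d.toProd.1 ∈ D.bags (a d) ∧ d.toProd.2 ∈ D.bags (a d) :=
    fun d => (D.edge_mem _ _ d.adj).choose_spec
  set ord : V → ℕ := fun v => (Fintype.equivFin V v : ℕ) with hord_def
  have hord : Function.Injective ord := fun u v h =>
    (Fintype.equivFin V).injective (Fin.val_injective h)
  set N := Fintype.card G.Dart + 1 with hNdef
  have hNpos : 0 < N := Nat.succ_pos _
  have hNk : 0 < N * k := Nat.mul_pos hNpos hk0
  -- canonical darts
  have hcano_or : ∀ d : G.Dart,
      d ∈ dartList D a ord (a d).1 ∨ d.symm ∈ dartList D a ord (a d.symm).1 := by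
    intro d
    have hne : ord d.toProd.1 ≠ ord d.toProd.2 := fun h => d.adj.ne (hord h)
    rcases lt_or_gt_of_ne hne with hlt | hgt
    · exact Or.inl (mem_dartList.mpr ⟨hlt, rfl⟩)
    · refine Or.inr (mem_dartList.mpr ⟨?_, rfl⟩)
      simpa [SimpleGraph.Dart.symm_toProd] using hgt
  refine ⟨⟨D.m * (N * k),
    fun t => bigBag D a ord hk0 (t.1 / (N * k)) (t.1 % (N * k) / k) (t.1 % k),
    ?_, ?_, ?_⟩, ?_⟩
  -- mem_nonempty
  · rintro (u | x)
    · obtain ⟨i0, hi0⟩ := D.mem_nonempty u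
      obtain ⟨hbound, hieq, -, -⟩ := encode_decode N k D.m i0.1 0 0 i0.isLt hNpos hk0
      refine ⟨⟨N * k * i0.1 + (k * 0 + 0), hbound⟩, ?_⟩
      simp only [inl_mem_bigBag, mem_bagsN]
      rw [hieq]
      exact ⟨i0.isLt, hi0⟩
    · obtain ⟨⟨d, i⟩, rfl⟩ := Quot.exists_rep x
      have hne : ord d.toProd.1 ≠ ord d.toProd.2 := fun h => d.adj.ne (hord h)
      rcases lt_or_gt_of_ne hne with hlt | hgt
      · obtain ⟨t, -, hm1, -⟩ := exists_good_bag hk0 D a ord d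
          (mem_dartList.mpr ⟨hlt, rfl⟩) i.1 i.isLt
        exact ⟨t, hm1⟩
      · have hc : d.symm ∈ dartList D a ord (a d.symm).1 := by
          refine mem_dartList.mpr ⟨?_, rfl⟩
          simpa [SimpleGraph.Dart.symm_toProd] using hgt
        obtain ⟨t, -, hm1, -⟩ := exists_good_bag hk0 D a ord d.symm hc
          (k - 1 - i.1) (by omega)
        refine ⟨t, ?_⟩
        rw [show Quot.mk (SubdivRep G k) (d, i) =
            Quot.mk (SubdivRep G k) (d.symm, ⟨k - 1 - i.1, by omega⟩) from
          Quot.sound ⟨rfl, rfl⟩]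
        exact hm1
  -- mem_interval
  · rintro (u | x) t1 t2 t3 h12 h23 m1 m3
    · -- branch vertices
      simp only [inl_mem_bigBag, mem_bagsN] at m1 m3 ⊢
      obtain ⟨hlt1, hm1⟩ := m1
      obtain ⟨hlt3, hm3⟩ := m3
      have h12' : t1.1 ≤ t2.1 := h12
      have h23' : t2.1 ≤ t3.1 := h23
      have hd12 : t1.1 / (N * k) ≤ t2.1 / (N * k) := Nat.div_le_div_right h12'
      have hd23 : t2.1 / (N * k) ≤ t3.1 / (N * k) := Nat.div_le_div_right h23'
      refine ⟨lt_of_le_of_lt hd23 hlt3, ?_⟩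
      exact D.mem_interval u ⟨_, hlt1⟩ ⟨_, lt_of_le_of_lt hd23 hlt3⟩ ⟨_, hlt3⟩
        hd12 hd23 hm1 hm3
    · -- internal vertices
      simp only [inr_mem_bigBag] at m1 m3 ⊢
      obtain ⟨h1, hx1⟩ := m1
      obtain ⟨h3, hx3⟩ := m3
      obtain ⟨w1, hw1, hxw1⟩ : ∃ w : Fin k,
          ((w : ℕ) = t1.1 % k ∨ (w : ℕ) = min (t1.1 % k + 1) (k-1)) ∧
          x = Quot.mk (SubdivRep G k)
            ((dartList D a ord (t1.1 / (N * k))).get ⟨t1.1 % (N * k) / k, h1.1⟩, w) := by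
        rcases hx1 with h | h
        exacts [⟨_, Or.inl rfl, h⟩, ⟨_, Or.inr rfl, h⟩]
      obtain ⟨w3, hw3, hxw3⟩ : ∃ w : Fin k,
          ((w : ℕ) = t3.1 % k ∨ (w : ℕ) = min (t3.1 % k + 1) (k-1)) ∧
          x = Quot.mk (SubdivRep G k)
            ((dartList D a ord (t3.1 / (N * k))).get ⟨t3.1 % (N * k) / k, h3.1⟩, w) := by
        rcases hx3 with h | h
        exacts [⟨_, Or.inl rfl, h⟩, ⟨_, Or.inr rfl, h⟩]
      have hd1 := mem_dartList.mp
        (List.get_mem (dartList D a ord (t1.1 / (N * k))) ⟨_, h1.1⟩)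
      have hd3 := mem_dartList.mp
        (List.get_mem (dartList D a ord (t3.1 / (N * k))) ⟨_, h3.1⟩)
      obtain ⟨hdd, hww⟩ := cano_unique hk0 hd1.1 hd3.1 (hxw1.symm.trans hxw3)
      have hii : t1.1 / (N * k) = t3.1 / (N * k) := by rw [← hd1.2, ← hd3.2, hdd]
      have hLeq : dartList D a ord (t3.1 / (N * k)) = dartList D a ord (t1.1 / (N * k)) := by
        rw [hii]
      have hget3 := get_congr' hLeq h3.1
      have hss : t1.1 % (N * k) / k = t3.1 % (N * k) / k :=
        congrArg Fin.val ((nodup_dartList D a ord (t1.1 / (N * k))).get_inj_iff.mp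
          (hdd.trans hget3))
      have r1 := recompose N k t1.1 hNpos hk0
      have r3 := recompose N k t3.1 hNpos hk0
      rw [← hii, ← hss] at r3
      have h12' : t1.1 ≤ t2.1 := h12
      have h23' : t2.1 ≤ t3.1 := h23
      have hI : t1.1 / (N * k) < D.m := (Nat.div_lt_iff_lt_mul hNk).mpr t1.isLt
      obtain ⟨ht2eq, hj12, hj23, hj2k⟩ :
          t2.1 = N * k * (t1.1 / (N * k)) +
              (k * (t1.1 % (N * k) / k) + (t2.1 - (N * k * (t1.1 / (N * k)) + k * (t1.1 % (N * k) / k)))) ∧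
            t1.1 % k ≤ t2.1 - (N * k * (t1.1 / (N * k)) + k * (t1.1 % (N * k) / k)) ∧
            t2.1 - (N * k * (t1.1 / (N * k)) + k * (t1.1 % (N * k) / k)) ≤ t3.1 % k ∧
            t2.1 - (N * k * (t1.1 / (N * k)) + k * (t1.1 % (N * k) / k)) < k := by
        obtain ⟨e1, -, e2⟩ := r1
        obtain ⟨e3, -, e4⟩ := r3
        omega
      obtain ⟨-, hI2, hS2, hJ2⟩ := encode_decode N k D.m (t1.1 / (N * k))
        (t1.1 % (N * k) / k) (t2.1 - (N * k * (t1.1 / (N * k)) + k * (t1.1 % (N * k) / k)))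
        hI r1.2.1 hj2k
      have hI2' : t2.1 / (N * k) = t1.1 / (N * k) := by rw [ht2eq]; exact hI2
      have hS2' : t2.1 % (N * k) / k = t1.1 % (N * k) / k := by rw [ht2eq]; exact hS2
      have hJ2' : t2.1 % k =
          t2.1 - (N * k * (t1.1 / (N * k)) + k * (t1.1 % (N * k) / k)) := by
        conv_lhs => rw [ht2eq]
        exact hJ2
      rw [hI2', hS2', hJ2']
      refine ⟨⟨h1.1, hj2k⟩, ?_⟩
      have hw3' : (w1 : ℕ) = t3.1 % k ∨ (w1 : ℕ) = min (t3.1 % k + 1) (k-1) := hww ▸ hw3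
      rcases j_interval hk0 r3.2.2 hj12 hj23 hw1 hw3' with h | h
      · exact Or.inl (by rw [hxw1, show w1 = (⟨_, hj2k⟩ : Fin k) from Fin.ext h])
      · refine Or.inr (by rw [hxw1, show w1 = (⟨min (t2.1 - (N * k * (t1.1 / (N * k)) + k * (t1.1 % (N * k) / k)) + 1) (k-1),
          Nat.lt_of_le_of_lt (Nat.min_le_right _ _) (Nat.sub_lt hk0 Nat.one_pos)⟩ : Fin k) from Fin.ext h])
  -- edge_mem
  · have key : ∀ x y : SubdivVertex G k, SubdivAdjBase G k x y →
        ∃ t : Fin (D.m * (N * k)),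
          x ∈ bigBag D a ord hk0 (t.1 / (N * k)) (t.1 % (N * k) / k) (t.1 % k) ∧
          y ∈ bigBag D a ord hk0 (t.1 / (N * k)) (t.1 % (N * k) / k) (t.1 % k) := by
      rintro (u | x) (v | y) hb
      · exact (hb : False).elim
      · obtain ⟨d, i, hi0, hdu, hy⟩ :=
          (hb : ∃ (d : G.Dart) (i : Fin k), (i : ℕ) = 0 ∧ d.toProd.1 = u ∧
            y = Quot.mk (SubdivRep G k) (d, i))
        have hne : ord d.toProd.1 ≠ ord d.toProd.2 := fun h => d.adj.ne (hord h)
        rcases lt_or_gt_of_ne hne with hlt | hgt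
        · obtain ⟨t, hinl, hm1, -⟩ := exists_good_bag hk0 D a ord d
            (mem_dartList.mpr ⟨hlt, rfl⟩) 0 hk0
          refine ⟨t, ?_, ?_⟩
          · exact hinl u (hdu ▸ (ha d).1)
          · rw [hy, show i = (⟨0, hk0⟩ : Fin k) from Fin.ext hi0]
            exact hm1
        · have hc : d.symm ∈ dartList D a ord (a d.symm).1 := by
            refine mem_dartList.mpr ⟨?_, rfl⟩
            simpa [SimpleGraph.Dart.symm_toProd] using hgt
          obtain ⟨t, hinl, hm1, -⟩ := exists_good_bag hk0 D a ord d.symm hc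
            (k - 1) (by omega)
          refine ⟨t, ?_, ?_⟩
          · apply hinl
            have h2 := (ha d.symm).2
            rw [show d.symm.toProd.2 = u from by
              rw [SimpleGraph.Dart.symm_toProd]; exact hdu] at h2
            exact h2
          · rw [hy, show Quot.mk (SubdivRep G k) (d, i) =
                Quot.mk (SubdivRep G k) (d.symm, (⟨k - 1, by omega⟩ : Fin k)) from
              Quot.sound ⟨rfl, by show k - 1 = k - 1 - (i : ℕ); omega⟩]
            exact hm1
      · exact (hb : False).elim
      · obtain ⟨d, i, j, hij, hx, hy⟩ :=
          (hb : ∃ (d : G.Dart) (i j : Fin k), (j : ℕ) = (i : ℕ) + 1 ∧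
            x = Quot.mk (SubdivRep G k) (d, i) ∧ y = Quot.mk (SubdivRep G k) (d, j))
        have hik := i.isLt
        have hjk := j.isLt
        have hne : ord d.toProd.1 ≠ ord d.toProd.2 := fun h => d.adj.ne (hord h)
        rcases lt_or_gt_of_ne hne with hlt | hgt
        · obtain ⟨t, -, hm1, hm2⟩ := exists_good_bag hk0 D a ord d
            (mem_dartList.mpr ⟨hlt, rfl⟩) i.1 i.isLt
          refine ⟨t, ?_, ?_⟩
          · rw [hx]; exact hm1
          · rw [hy, show j = (⟨min (i.1 + 1) (k-1),
              Nat.lt_of_le_of_lt (Nat.min_le_right _ _) (Nat.sub_lt hk0 Nat.one_pos)⟩ : Fin k) from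
              Fin.ext (by show (j : ℕ) = min (i.1 + 1) (k-1); omega)]
            exact hm2
        · have hc : d.symm ∈ dartList D a ord (a d.symm).1 := by
            refine mem_dartList.mpr ⟨?_, rfl⟩
            simpa [SimpleGraph.Dart.symm_toProd] using hgt
          obtain ⟨t, -, hm1, hm2⟩ := exists_good_bag hk0 D a ord d.symm hc
            (k - 1 - j.1) (by omega)
          refine ⟨t, ?_, ?_⟩
          · rw [hx, show Quot.mk (SubdivRep G k) (d, i) =
                Quot.mk (SubdivRep G k) (d.symm, (⟨min (k - 1 - j.1 + 1) (k-1),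
                  Nat.lt_of_le_of_lt (Nat.min_le_right _ _) (Nat.sub_lt hk0 Nat.one_pos)⟩ : Fin k)) from
              Quot.sound ⟨rfl, by show min (k - 1 - j.1 + 1) (k-1) = k - 1 - (i : ℕ); omega⟩]
            exact hm2
          · rw [hy, show Quot.mk (SubdivRep G k) (d, j) =
                Quot.mk (SubdivRep G k) (d.symm, (⟨k - 1 - j.1, by omega⟩ : Fin k)) from
              Quot.sound ⟨rfl, rfl⟩]
            exact hm1
    rintro x y hadj
    have hadj' : x ≠ y ∧ (SubdivAdjBase G k x y ∨ SubdivAdjBase G k y x) := hadj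
    rcases hadj'.2 with hb | hb
    · exact key x y hb
    · obtain ⟨t, h1, h2⟩ := key y x hb
      exact ⟨t, h2, h1⟩
  -- width bound
  · intro t
    exact ⟨bigBag_finite (hk := hk0) (fun i => (hD i).1),
      bigBag_ncard (hk := hk0) (fun i => (hD i).2)⟩
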